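/- Let z(y) denote the inverse function of y(z) = z·log z for z ≥ 1/e. If y ≥ r·e^r where r ≥ e, then z(y) ≤ (1 + (log r)/r) · y / log y. -/
import Mathlib


/-- Let `z(y)` be the inverse of `y(z) = z·log z` for `z ≥ 1/e`.
If `y ≥ r·e^r` with `r ≥ e`, then `z(y) ≤ (1 + log r / r) · y / log y`.
(Formulated without the inverse function: any `z ≥ 1/e` with `z·log z = y`
satisfies the bound.) -/
theorem inverse_z_upper_bound (r y z : ℝ)
    (hr : Real.exp 1 ≤ r) (hy : r * Real.exp r ≤ y)
    (hz : 1 / Real.exp 1 ≤ z) (hzy : z * Real.log z = y) :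
    z ≤ (1 + Real.log r / r) * y / Real.log y := by
  have he : (1:ℝ) < Real.exp 1 := by
    have := Real.exp_one_gt_d9; linarith
  have hr1 : 1 < r := lt_of_lt_of_le he hr
  have hrpos : 0 < r := by linarith
  have hzpos : 0 < z := lt_of_lt_of_le (by positivity) hz
  -- z ≥ exp r
  have hzer : Real.exp r ≤ z := by
    by_contra h
    push_neg at h
    have hlz : Real.log z < r := by
      have := Real.log_lt_log hzpos h
      simpa [Real.log_exp] using this
    have hyz : z * Real.log z < r * Real.exp r := by
      rcases le_or_gt (Real.log z) 0 with h0 | h0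
      · have h1 : z * Real.log z ≤ 0 := mul_nonpos_of_nonneg_of_nonpos hzpos.le h0
        nlinarith [Real.exp_pos r]
      · nlinarith [Real.exp_pos r]
    rw [hzy] at hyz
    linarith
  have hlogz : r ≤ Real.log z := by
    have := Real.log_le_log (Real.exp_pos r) hzer
    simpa [Real.log_exp] using this
  have hlz1 : Real.exp 1 ≤ Real.log z := le_trans hr hlogz
  have hlzpos : 0 < Real.log z := by linarith
  have hanti : Real.log (Real.log z) / Real.log z ≤ Real.log r / r :=
    Real.log_div_self_antitoneOn hr hlz1 hlogz
  have hlrpos : 0 < Real.log r := Real.log_pos hr1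
  have hllz : Real.log r ≤ Real.log (Real.log z) :=
    Real.log_le_log hrpos hlogz
  have hly : Real.log y = Real.log z + Real.log (Real.log z) := by
    rw [← hzy, Real.log_mul (ne_of_gt hzpos) (ne_of_gt hlzpos)]
  have hlypos : 0 < Real.log y := by
    rw [hly]; linarith
  have hkey : Real.log y ≤ (1 + Real.log r / r) * Real.log z := by
    rw [hly]
    have : Real.log (Real.log z) ≤ (Real.log r / r) * Real.log z := by
      rw [div_le_div_iff₀ hlzpos hrpos] at hanti
      rw [div_mul_eq_mul_div, le_div_iff₀ hrpos]
      linarith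
    linarith
  rw [le_div_iff₀ hlypos]
  nth_rewrite 2 [← hzy]
  nlinarith [mul_le_mul_of_nonneg_left hkey hzpos.le]
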